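/- Let f : A → B be a differential homomorphism of Keigher rings. If the map f* : Spec B → Spec A, 𝔮 ↦ f⁻¹(𝔮), is surjective, then the map f*_Δ : Spec^Δ B → Spec^Δ A, 𝔮 ↦ f⁻¹(𝔮), is surjective; that is, every prime differential ideal of A is the contraction of a prime differential ideal of B. -/

import Mathlib

/-!
Common differential-algebra preamble.

A differential ring is a commutative ring `R` equipped with a family of derivations
`δ : ι → Derivation ℤ R R`.  Induced derivations on quotients by differential ideals
and on localizations are unique (the canonical map is an epimorphism), which justifies
quantifying universally over derivation families commuting with the canonical map.
-/

universe u v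

section Preamble

variable {ι : Type*}

/-- An ideal is a *differential ideal* with respect to a family of derivations. -/
def IsDiffIdeal {R : Type*} [CommRing R] (δ : ι → Derivation ℤ R R) (I : Ideal R) : Prop :=
  ∀ i : ι, ∀ x ∈ I, δ i x ∈ I

/-- A *Keigher ring*: the radical of any differential ideal is again differential. -/
def IsKeigher {R : Type*} [CommRing R] (δ : ι → Derivation ℤ R R) : Prop :=
  ∀ I : Ideal R, IsDiffIdeal δ I → IsDiffIdeal δ I.radical

/-- A ring homomorphism is a *differential homomorphism* if it commutes with the
derivations. -/
def IsDiffHom {A B : Type*} [CommRing A] [CommRing B]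
    (δA : ι → Derivation ℤ A A) (δB : ι → Derivation ℤ B B) (f : A →+* B) : Prop :=
  ∀ (i : ι) (a : A), f (δA i a) = δB i (f a)

theorem IsDiffHom.comp {A B C : Type*} [CommRing A] [CommRing B] [CommRing C]
    {δA : ι → Derivation ℤ A A} {δB : ι → Derivation ℤ B B} {δC : ι → Derivation ℤ C C}
    {f : A →+* B} {g : B →+* C} (hf : IsDiffHom δA δB f) (hg : IsDiffHom δB δC g) :
    IsDiffHom δA δC (g.comp f) := fun i a => by
  simp only [RingHom.comp_apply, hf i a, hg i (f a)]

/-- Iterated application of the derivations along a list of indices. -/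
def derivApply {B : Type*} [CommRing B] (δ : ι → Derivation ℤ B B) : List ι → B → B
  | [], b => b
  | i :: l, b => δ i (derivApply δ l b)

/-- `B` is *differentially finitely generated* over `A`: finitely many elements whose
iterated derivatives generate `B` as an `A`-algebra. -/
def IsDiffFG (A : Type*) {B : Type*} [CommRing A] [CommRing B] [Algebra A B]
    (δ : ι → Derivation ℤ B B) : Prop :=
  ∃ s : Finset B,
    Algebra.adjoin A {x : B | ∃ b ∈ s, ∃ l : List ι, derivApply δ l b = x} = ⊤

/-- A differential ring is *differentially simple* if it is nonzero and its only
differential ideals are `⊥` and `⊤`. -/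
def IsDiffSimple {R : Type*} [CommRing R] (δ : ι → Derivation ℤ R R) : Prop :=
  Nontrivial R ∧ ∀ I : Ideal R, IsDiffIdeal δ I → I = ⊥ ∨ I = ⊤

/-- The differential spectrum `Spec^Δ`, as a subspace of the prime spectrum. -/
def DiffSpec {R : Type*} [CommRing R] (δ : ι → Derivation ℤ R R) : Type _ :=
  {p : PrimeSpectrum R // IsDiffIdeal δ p.asIdeal}

instance {R : Type*} [CommRing R] (δ : ι → Derivation ℤ R R) :
    TopologicalSpace (DiffSpec δ) :=
  inferInstanceAs (TopologicalSpace {p : PrimeSpectrum R // IsDiffIdeal δ p.asIdeal})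

/-- The contraction map `f*_Δ : Spec^Δ B → Spec^Δ A` induced by a differential
homomorphism. -/
def diffComap {A B : Type*} [CommRing A] [CommRing B]
    {δA : ι → Derivation ℤ A A} {δB : ι → Derivation ℤ B B} {f : A →+* B}
    (hf : IsDiffHom δA δB f) (q : DiffSpec δB) : DiffSpec δA :=
  ⟨PrimeSpectrum.comap f q.1, fun i x hx => by
    have h : f x ∈ q.1.asIdeal := hx
    have hd := q.2 i (f x) h
    show f (δA i x) ∈ q.1.asIdeal
    rw [hf i x]
    exact hd⟩

/-- Going-up property for prime ideals. -/
def HasGoingUp {A B : Type*} [CommRing A] [CommRing B] (f : A →+* B) : Prop :=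
  ∀ p p' : Ideal A, p.IsPrime → p'.IsPrime → p ≤ p' →
    ∀ q : Ideal B, q.IsPrime → q.comap f = p →
      ∃ q' : Ideal B, q'.IsPrime ∧ q ≤ q' ∧ q'.comap f = p'

/-- Going-down property for prime ideals. -/
def HasGoingDown {A B : Type*} [CommRing A] [CommRing B] (f : A →+* B) : Prop :=
  ∀ p p' : Ideal A, p.IsPrime → p'.IsPrime → p' ≤ p →
    ∀ q : Ideal B, q.IsPrime → q.comap f = p →
      ∃ q' : Ideal B, q'.IsPrime ∧ q' ≤ q ∧ q'.comap f = p'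

/-- Going-up property for prime differential ideals. -/
def HasGoingUpDiff {A B : Type*} [CommRing A] [CommRing B]
    (δA : ι → Derivation ℤ A A) (δB : ι → Derivation ℤ B B) (f : A →+* B) : Prop :=
  ∀ p p' : Ideal A, p.IsPrime → IsDiffIdeal δA p → p'.IsPrime → IsDiffIdeal δA p' → p ≤ p' →
    ∀ q : Ideal B, q.IsPrime → IsDiffIdeal δB q → q.comap f = p →
      ∃ q' : Ideal B, q'.IsPrime ∧ IsDiffIdeal δB q' ∧ q ≤ q' ∧ q'.comap f = p'

/-- Going-down property for prime differential ideals. -/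
def HasGoingDownDiff {A B : Type*} [CommRing A] [CommRing B]
    (δA : ι → Derivation ℤ A A) (δB : ι → Derivation ℤ B B) (f : A →+* B) : Prop :=
  ∀ p p' : Ideal A, p.IsPrime → IsDiffIdeal δA p → p'.IsPrime → IsDiffIdeal δA p' → p' ≤ p →
    ∀ q : Ideal B, q.IsPrime → IsDiffIdeal δB q → q.comap f = p →
      ∃ q' : Ideal B, q'.IsPrime ∧ IsDiffIdeal δB q' ∧ q' ≤ q ∧ q'.comap f = p'

/-- Constructible subsets of a topological space: finite unions of sets of the form
(open ∩ closed). -/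
def IsConstructibleSet {X : Type*} [TopologicalSpace X] (E : Set X) : Prop :=
  ∃ S : Finset (Set X × Set X), (∀ p ∈ S, IsOpen p.1 ∧ IsClosed p.2) ∧
    E = ⋃ p ∈ S, p.1 ∩ p.2

/-- Membership in `SMax^Δ R`: `p` is a prime differential ideal such that the
localization `(R/p)_s` is differentially simple for some `s ∉ p`.  The quotient and
localization are taken with their (unique) induced derivations, hence the universal
quantification over derivation families commuting with the canonical maps. -/
def InSMax {R : Type u} [CommRing R] (δ : ι → Derivation ℤ R R) (p : Ideal R) : Prop :=
  p.IsPrime ∧ IsDiffIdeal δ p ∧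
  ∃ s : R, s ∉ p ∧
    ∀ δq : ι → Derivation ℤ (R ⧸ p) (R ⧸ p),
      IsDiffHom δ δq (Ideal.Quotient.mk p) →
      ∀ (L : Type u) [CommRing L] [Algebra (R ⧸ p) L],
        IsLocalization.Away (Ideal.Quotient.mk p s) L →
        ∀ δl : ι → Derivation ℤ L L,
          IsDiffHom δq δl (algebraMap (R ⧸ p) L) → IsDiffSimple δl

end Preamble


section AuxKeigher

variable {ι B : Type*} [CommRing B] {δ : ι → Derivation ℤ B B}

lemma isDiffIdeal_span {s : Set B}
    (h : ∀ i, ∀ x ∈ s, δ i x ∈ Ideal.span s) : IsDiffIdeal δ (Ideal.span s) := by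
  intro i x hx
  induction hx using Submodule.span_induction with
  | mem x hxs => exact h i x hxs
  | zero => simpa using (Ideal.span s).zero_mem
  | add x y hx hy ihx ihy => simpa using Ideal.add_mem _ ihx ihy
  | smul b x hx ihx =>
      have hleib : (δ i) (b * x) = b * δ i x + x * δ i b := by
        rw [Derivation.leibniz, smul_eq_mul, smul_eq_mul]
      have : b * δ i x + x * δ i b ∈ Ideal.span s :=
        Ideal.add_mem _ (Ideal.mul_mem_left _ b ihx) (Ideal.mul_mem_right _ _ hx)
      simpa [smul_eq_mul, hleib] using this

lemma isDiffIdeal_sup {I J : Ideal B} (hI : IsDiffIdeal δ I) (hJ : IsDiffIdeal δ J) :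
    IsDiffIdeal δ (I ⊔ J) := by
  intro i x hx
  rcases Submodule.mem_sup.1 hx with ⟨a, ha, b, hb, rfl⟩
  simpa using Submodule.mem_sup.2 ⟨δ i a, hI i a ha, δ i b, hJ i b hb, rfl⟩

/-- The differential ideal generated by one element. -/
def derivGen (δ : ι → Derivation ℤ B B) (a : B) : Ideal B :=
  Ideal.span {x | ∃ l : List ι, derivApply δ l a = x}

lemma derivGen_isDiff (a : B) : IsDiffIdeal δ (derivGen δ a) := by
  apply isDiffIdeal_span
  rintro i x ⟨l, rfl⟩
  exact Ideal.subset_span ⟨i :: l, rfl⟩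

lemma self_mem_derivGen (a : B) : a ∈ derivGen δ a :=
  Ideal.subset_span ⟨[], rfl⟩

/-- Key lemma: in a radical differential ideal, `x * y ∈ q` implies `x * δ y ∈ q`. -/
lemma mul_deriv_mem {q : Ideal B} (hqd : IsDiffIdeal δ q) (hqr : q.radical = q)
    {x y : B} (hxy : x * y ∈ q) (i : ι) : x * δ i y ∈ q := by
  have h1 : x * δ i y + y * δ i x ∈ q := by
    have := hqd i _ hxy
    rwa [Derivation.leibniz, smul_eq_mul, smul_eq_mul] at this
  have h2 : (x * δ i y) * (x * δ i y) + (x * δ i y) * (y * δ i x) ∈ q := by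
    have := Ideal.mul_mem_left q (x * δ i y) h1
    rwa [mul_add] at this
  have h3 : (x * δ i y) * (y * δ i x) ∈ q := by
    have : (x * δ i y) * (y * δ i x) = (x * y) * (δ i y * δ i x) := by ring
    rw [this]; exact Ideal.mul_mem_right _ _ hxy
  have h4 : (x * δ i y) ^ 2 ∈ q := by
    have := Ideal.sub_mem q h2 h3
    simpa [pow_two] using this
  rw [← hqr]
  exact ⟨2, h4⟩

lemma mul_derivApply_mem {q : Ideal B} (hqd : IsDiffIdeal δ q) (hqr : q.radical = q)
    {x y : B} (hxy : x * y ∈ q) (l : List ι) : x * derivApply δ l y ∈ q := by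
  induction l with
  | nil => exact hxy
  | cons i l ih => exact mul_deriv_mem hqd hqr ih i

lemma derivApply_mul_derivApply_mem {q : Ideal B} (hqd : IsDiffIdeal δ q)
    (hqr : q.radical = q) {x y : B} (hxy : x * y ∈ q) (l1 l2 : List ι) :
    derivApply δ l1 x * derivApply δ l2 y ∈ q := by
  have h1 : x * derivApply δ l2 y ∈ q := mul_derivApply_mem hqd hqr hxy l2
  have h2 : derivApply δ l2 y * x ∈ q := by rwa [mul_comm] at h1
  have := mul_derivApply_mem hqd hqr h2 l1
  rwa [mul_comm] at this

lemma derivGen_mul_derivGen_le {q : Ideal B} (hqd : IsDiffIdeal δ q)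
    (hqr : q.radical = q) {x y : B} (hxy : x * y ∈ q) :
    derivGen δ x * derivGen δ y ≤ q := by
  rw [derivGen, derivGen, Ideal.span_mul_span, Ideal.span_le]
  intro z hz
  simp only [Set.mem_mul] at hz
  obtain ⟨u, ⟨l1, rfl⟩, v, ⟨l2, rfl⟩, rfl⟩ := hz
  exact derivApply_mul_derivApply_mem hqd hqr hxy l1 l2

end AuxKeigher

/-- If the map `f* : Spec B → Spec A` induced by a differential
homomorphism of Keigher rings is surjective, then so is the map
`f*_Δ : Spec^Δ B → Spec^Δ A`. -/
theorem stmt1 {ι A B : Type*} [CommRing A] [CommRing B]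
    (δA : ι → Derivation ℤ A A) (δB : ι → Derivation ℤ B B)
    (hKA : IsKeigher δA) (hKB : IsKeigher δB)
    (f : A →+* B) (hf : IsDiffHom δA δB f)
    (hsurj : Function.Surjective (PrimeSpectrum.comap f)) :
    Function.Surjective (diffComap hf) := by
  rintro ⟨p, hpd⟩
  -- the prime `p` of `A`; by surjectivity it is a contraction
  obtain ⟨q₀, hq₀⟩ := hsurj p
  -- the differential ideal generated by `f(p)` and its radical
  set J : Ideal B := (p.asIdeal.map f).radical with hJ
  have hmapd : IsDiffIdeal δB (p.asIdeal.map f) := by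
    rw [Ideal.map]
    apply isDiffIdeal_span
    rintro i x ⟨a, ha, rfl⟩
    exact Ideal.subset_span ⟨δA i a, hpd i a ha, hf i a⟩
  have hJd : IsDiffIdeal δB J := hKB _ hmapd
  -- the family for Zorn's lemma
  set S : Set (Ideal B) :=
    {I : Ideal B | IsDiffIdeal δB I ∧ J ≤ I ∧ ∀ a : A, a ∉ p.asIdeal → f a ∉ I} with hS
  have hq₀c : q₀.asIdeal.comap f = p.asIdeal := congrArg PrimeSpectrum.asIdeal hq₀
  have hJS : J ∈ S := by
    refine ⟨hJd, le_rfl, fun a ha hfa => ha ?_⟩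
    have hJq₀ : J ≤ q₀.asIdeal := by
      rw [hJ]
      exact le_trans (Ideal.radical_mono (Ideal.map_le_iff_le_comap.mpr hq₀c.ge))
        (le_of_eq q₀.isPrime.radical)
    rw [← hq₀c]
    exact hJq₀ hfa
  obtain ⟨q, hJq, hqS, hqmax⟩ := zorn_le_nonempty₀ S (fun c hcS hchain y hy => by
    refine ⟨sSup c, ⟨?_, ?_, ?_⟩, fun z hz => le_sSup hz⟩
    · intro i x hx
      have hdir : DirectedOn (· ≤ ·) c := hchain.directedOn
      rcases (Submodule.mem_sSup_of_directed ⟨y, hy⟩ hdir).1 hx with ⟨I, hIc, hxI⟩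
      exact le_sSup hIc ((hcS hIc).1 i x hxI)
    · exact le_trans (hcS hy).2.1 (le_sSup hy)
    · intro a ha hfa
      have hdir : DirectedOn (· ≤ ·) c := hchain.directedOn
      rcases (Submodule.mem_sSup_of_directed ⟨y, hy⟩ hdir).1 hfa with ⟨I, hIc, hxI⟩
      exact (hcS hIc).2.2 a ha hxI) J hJS
  obtain ⟨hqd, hJleq, hqdisj⟩ := hqS
  -- q is radical
  have hqrad : q.radical = q := by
    have hradS : q.radical ∈ S := by
      refine ⟨hKB q hqd, le_trans hJleq q.le_radical, fun a ha hfa => ?_⟩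
      rcases hfa with ⟨n, hn⟩
      rw [← map_pow] at hn
      exact hqdisj (a ^ n) (fun h => ha (p.isPrime.mem_of_pow_mem n h)) hn
    exact le_antisymm (hqmax hradS q.le_radical) q.le_radical
  -- q is disjoint from f(A \ p); strict differential oversets meet f(A \ p)
  have hstep : ∀ x : B, x ∉ q → ∃ a : A, a ∉ p.asIdeal ∧ f a ∈ (q ⊔ derivGen δB x).radical := by
    intro x hx
    by_contra hcon
    push_neg at hcon
    have hmem : (q ⊔ derivGen δB x).radical ∈ S :=
      ⟨hKB _ (isDiffIdeal_sup hqd (derivGen_isDiff x)),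
        le_trans hJleq (le_trans le_sup_left (Ideal.le_radical)),
        hcon⟩
    have hle : q ≤ (q ⊔ derivGen δB x).radical := le_trans le_sup_left Ideal.le_radical
    have heq := le_antisymm (hqmax hmem hle) hle
    exact hx (heq ▸ ((le_trans le_sup_right Ideal.le_radical : derivGen δB x ≤ (q ⊔ derivGen δB x).radical) (self_mem_derivGen x) : x ∈ _))
  -- q is prime
  have hqne : q ≠ ⊤ := by
    intro h
    exact hqdisj 1 (p.isPrime.ne_top ∘ (Ideal.eq_top_iff_one _).2) (by simp [h])
  have hqprime : q.IsPrime := by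
    rw [Ideal.isPrime_iff]
    refine ⟨hqne, fun {x y} hxy => ?_⟩
    by_contra hcon
    push_neg at hcon
    obtain ⟨hx, hy⟩ := hcon
    obtain ⟨a, ha, hfa⟩ := hstep x hx
    obtain ⟨b, hb, hfb⟩ := hstep y hy
    rcases hfa with ⟨n, hn⟩
    rcases hfb with ⟨m, hm⟩
    have hab : f (a * b) ∈ q := by
      rw [← hqrad]
      have hprod : f a ^ n * f b ^ m ∈ (q ⊔ derivGen δB x) * (q ⊔ derivGen δB y) :=
        Ideal.mul_mem_mul hn hm
      have hle : (q ⊔ derivGen δB x) * (q ⊔ derivGen δB y) ≤ q := by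
        rw [Ideal.sup_mul, Ideal.mul_sup, Ideal.mul_sup]
        refine sup_le (sup_le ?_ ?_) (sup_le ?_ ?_)
        · exact le_trans Ideal.mul_le_inf inf_le_left
        · exact le_trans Ideal.mul_le_inf inf_le_left
        · exact le_trans Ideal.mul_le_inf inf_le_right
        · exact derivGen_mul_derivGen_le hqd hqrad hxy
      refine ⟨n + m, ?_⟩
      have : (f (a * b)) ^ (n + m) = (f a ^ n * f b ^ m) * (f a ^ m * f b ^ n) := by
        rw [map_mul]; ring
      rw [this]
      exact Ideal.mul_mem_right _ _ (hle hprod)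
    exact hqdisj (a * b) (fun h => (p.isPrime.mem_or_mem h).elim ha hb) hab
  -- contraction of q is p
  have hcomap : q.comap f = p.asIdeal := by
    apply le_antisymm
    · intro a ha
      by_contra hc
      exact hqdisj a hc ha
    · intro a ha
      exact hJleq (Ideal.le_radical (Ideal.mem_map_of_mem f ha))
  exact ⟨⟨⟨q, hqprime⟩, hqd⟩, by
    apply Subtype.ext
    apply PrimeSpectrum.ext
    exact hcomap⟩
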